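/- arXiv:2012.02547 — 4 statements merged into one kernel-verified Lean document; each statement's English description precedes it below -/
import Mathlib

section
/- Let K be a nonempty compact convex subset of the Euclidean plane ℝ², and let A, C ∈ ℝ² be points with A ∉ interior K and C ∉ interior K. Then there exists a point B' in the topological frontier of K such that ‖A − B'‖ + ‖B' − C‖ ≤ ‖A − B‖ + ‖B − C‖ for every B ∈ K. -/
/-- A preconnected set meeting both a set and its complement meets its frontier. -/
lemma preconnected_inter_frontier {X : Type*} [TopologicalSpace X] {s t : Set X}
    (hs : IsPreconnected s) (h1 : (s ∩ t).Nonempty) (h2 : (s \ t).Nonempty) :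
    (s ∩ frontier t).Nonempty := by
  by_contra h
  rw [Set.not_nonempty_iff_eq_empty] at h
  have hsub : s ⊆ interior t ∪ (closure t)ᶜ := by
    intro x hx
    have hxf : x ∉ frontier t := fun hf => (Set.eq_empty_iff_forall_notMem.1 h x ⟨hx, hf⟩)
    by_cases hxc : x ∈ closure t
    · left
      by_contra hxi
      exact hxf ⟨hxc, hxi⟩
    · right; exact hxc
  have h1' : (s ∩ interior t).Nonempty := by
    obtain ⟨x, hxs, hxt⟩ := h1
    refine ⟨x, hxs, ?_⟩
    rcases hsub hxs with h' | h'
    · exact h'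
    · exact absurd (subset_closure hxt) h'
  have h2' : (s ∩ (closure t)ᶜ).Nonempty := by
    obtain ⟨x, hxs, hxt⟩ := h2
    refine ⟨x, hxs, ?_⟩
    rcases hsub hxs with h' | h'
    · exact absurd (interior_subset h') hxt
    · exact h'
  obtain ⟨x, _, hxi, hxc⟩ := hs (interior t) (closure t)ᶜ isOpen_interior
    isClosed_closure.isOpen_compl hsub h1' h2'
  exact hxc (subset_closure (interior_subset hxi))

/-- Any point selected in an optimal solution of the XPPN can be placed on the
boundary of its neighborhood: there is a frontier point of `K` whose two-leg
cost from `A` to `C` is at most that of any point of `K`. -/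
theorem stmt_2 (K : Set (EuclideanSpace ℝ (Fin 2))) (hKne : K.Nonempty)
    (hKcpt : IsCompact K) (hKconv : Convex ℝ K)
    (A C : EuclideanSpace ℝ (Fin 2))
    (hA : A ∉ interior K) (hC : C ∉ interior K) :
    ∃ B' ∈ frontier K, ∀ B ∈ K, ‖A - B'‖ + ‖B' - C‖ ≤ ‖A - B‖ + ‖B - C‖ := by
  have hcont : Continuous fun B : EuclideanSpace ℝ (Fin 2) => ‖A - B‖ + ‖B - C‖ := by
    continuity
  obtain ⟨B₀, hB₀K, hB₀min⟩ := hKcpt.exists_isMinOn hKne hcont.continuousOn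
  by_cases hB₀i : B₀ ∈ interior K
  · -- move along the segment from A to B₀ to the frontier
    have hseg : IsPreconnected (segment ℝ A B₀) := (convex_segment A B₀).isPreconnected
    have h1 : (segment ℝ A B₀ ∩ interior K).Nonempty :=
      ⟨B₀, right_mem_segment ℝ A B₀, hB₀i⟩
    have h2 : (segment ℝ A B₀ \ interior K).Nonempty :=
      ⟨A, left_mem_segment ℝ A B₀, hA⟩
    obtain ⟨B', hB'seg, hB'f⟩ := preconnected_inter_frontier hseg h1 h2
    have hfront : B' ∈ frontier K := by
      have : frontier (interior K) ⊆ frontier K := by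
        rw [frontier, frontier, interior_interior]
        exact Set.diff_subset_diff_left (closure_mono interior_subset)
      exact this hB'f
    refine ⟨B', hfront, fun B hB => ?_⟩
    have hdist : dist A B' + dist B' B₀ = dist A B₀ := dist_add_dist_of_mem_segment hB'seg
    have htri : ‖B' - C‖ ≤ ‖B' - B₀‖ + ‖B₀ - C‖ := norm_sub_le_norm_sub_add_norm_sub B' B₀ C
    have hmin : ‖A - B₀‖ + ‖B₀ - C‖ ≤ ‖A - B‖ + ‖B - C‖ := hB₀min hB
    simp only [dist_eq_norm] at hdist
    linarith
  · refine ⟨B₀, ⟨subset_closure hB₀K, hB₀i⟩, fun B hB => hB₀min hB⟩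
end

section
/- Let n : ℕ, let v₁ be a distinguished element of Fin n (city 1), let s : Fin n → ℝ, and let z : Fin n → Fin n → ℝ take values in {0, 1} and satisfy n·(z v w) + s v − s w ≤ n − 1 for all v, w ∈ Fin n with v ≠ v₁ and w ≠ v₁. Then there is no closed walk v₀, v₁', …, v_k = v₀ with k ≥ 1 such that v_i ≠ v₁ for all i and z (v_i) (v_{i+1}) = 1 for all i < k. Equivalently, every closed sequence of cities using only edges with z = 1 must pass through the distinguished city v₁. -/
/-- Under the Miller–Tucker–Zemlin constraints (imposed on all edges not
touching a distinguished city `v₁`) with binary variables `z`, there is no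
closed walk of positive length avoiding `v₁` all of whose edges have `z = 1`;
i.e. every closed sequence of cities must pass through city `v₁`. -/
theorem stmt_11 (n : ℕ) (v₁ : Fin n) (s : Fin n → ℝ) (z : Fin n → Fin n → ℝ)
    (hz01 : ∀ v w, z v w = 0 ∨ z v w = 1)
    (hmtz : ∀ v w, v ≠ v₁ → w ≠ v₁ →
      (n : ℝ) * z v w + s v - s w ≤ (n : ℝ) - 1) :
    ¬ ∃ (k : ℕ) (w : ℕ → Fin n), 1 ≤ k ∧ w k = w 0 ∧
        (∀ i ≤ k, w i ≠ v₁) ∧ (∀ i < k, z (w i) (w (i + 1)) = 1) := by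
  rintro ⟨k, w, hk, hclose, hne, hedge⟩
  have key : ∀ i ≤ k, s (w 0) + i ≤ s (w i) := by
    intro i hi
    induction i with
    | zero => simp
    | succ m ih =>
      have hm : m ≤ k := Nat.le_of_succ_le hi
      have hlt : m < k := hi
      have h1 := hmtz (w m) (w (m+1)) (hne m hm) (hne (m+1) hi)
      rw [hedge m hlt, mul_one] at h1
      have := ih hm
      push_cast
      linarith
  have := key k le_rfl
  rw [hclose] at this
  have hk' : (1 : ℝ) ≤ (k : ℝ) := by exact_mod_cast hk
  linarith
end

section
/- Let V be a finite type and let σ be a permutation of V that is a single cycle whose support is all of V (i.e. σ.IsCycle and σ.support = Finset.univ). Then for every nonempty finite set S ⊆ V with S ≠ Finset.univ, the number of elements v ∈ S with σ v ∈ S is at most |S| − 1. -/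
/-- Validity of the subtour elimination constraints: if the successor
permutation `σ` of a tour is a single cycle covering all vertices, then for
every nonempty proper subset `S` of vertices, the number of tour edges with
both endpoints in `S` is at most `|S| - 1`. -/
theorem stmt_13 {V : Type*} [Fintype V] [DecidableEq V]
    (σ : Equiv.Perm V) (hcyc : σ.IsCycle) (hsupp : σ.support = Finset.univ)
    (S : Finset V) (hSne : S.Nonempty) (hSproper : S ≠ Finset.univ) :
    (S.filter fun v => σ v ∈ S).card ≤ S.card - 1 := by
  by_contra h
  push_neg at h
  have hfle : (S.filter fun v => σ v ∈ S).card ≤ S.card :=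
    Finset.card_le_card (Finset.filter_subset _ _)
  have hclosed : ∀ v ∈ S, σ v ∈ S := by
    by_contra hc
    push_neg at hc
    obtain ⟨v, hv, hvS⟩ := hc
    have hsub : (S.filter fun v => σ v ∈ S) ⊆ S.erase v := by
      intro w hw
      simp only [Finset.mem_filter] at hw
      refine Finset.mem_erase.2 ⟨?_, hw.1⟩
      rintro rfl; exact hvS hw.2
    have := Finset.card_le_card hsub
    rw [Finset.card_erase_of_mem hv] at this
    omega
  obtain ⟨x, hx⟩ := hSne
  obtain ⟨y, hy⟩ : ∃ y, y ∉ S := by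
    by_contra hy; push_neg at hy
    exact hSproper (Finset.eq_univ_iff_forall.2 hy)
  have hmove : ∀ a : V, σ a ≠ a := fun a =>
    Equiv.Perm.mem_support.1 (hsupp ▸ Finset.mem_univ a)
  obtain ⟨n, hn⟩ := hcyc.exists_pow_eq (hmove x) (hmove y)
  have hpow : ∀ m : ℕ, (σ ^ m) x ∈ S := by
    intro m
    induction m with
    | zero => simpa using hx
    | succ m ih => rw [pow_succ']; simpa using hclosed _ ih
  exact hy (hn ▸ hpow n)
end

section
/- Let n ≥ 3 and let z : Fin n → Fin n → ℝ satisfy: 0 ≤ z v w ≤ 1 for all v, w; z v v = 0 for all v; ∑_{w ≠ v} z v w = 1 and ∑_{w ≠ v} z w v = 1 for every v (degree constraints); and for every nonempty S ⊆ Fin n with S ≠ univ, ∑_{v ∈ S} ∑_{w ∈ S} z v w ≤ |S| − 1 (subtour elimination constraints). Then there exists s : Fin n → ℝ such that n·(z v w) + s v − s w ≤ n − 1 for all v, w ∈ Fin n with v ≠ w, v ≠ 0 and w ≠ 0. -/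
namespace Stmt14Aux

/-- arcs of a list, as (source, target) pairs: list `[a, b, c]` represents the
path `c → b → a`, with arcs `(b,a)` and `(c,b)`. -/
def arcs {α : Type*} : List α → List (α × α)
  | a :: b :: t => (b, a) :: arcs (b :: t)
  | _ => []

lemma arcs_map_fst {α : Type*} : ∀ l : List α, (arcs l).map Prod.fst = l.tail
  | [] => rfl
  | [_] => rfl
  | a :: b :: t => by
    simp [arcs, arcs_map_fst (b :: t)]

lemma mem_arcs {α : Type*} : ∀ {l : List α} {p : α × α}, p ∈ arcs l → p.1 ∈ l ∧ p.2 ∈ l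
  | [], p, h => by simp [arcs] at h
  | [_], p, h => by simp [arcs] at h
  | a :: b :: t, p, h => by
    simp only [arcs, List.mem_cons] at h
    rcases h with h | h
    · subst h; simp
    · have := mem_arcs h
      exact ⟨List.mem_cons_of_mem _ this.1, List.mem_cons_of_mem _ this.2⟩

lemma arcs_append {α : Type*} (u : α) (q : List α) :
    ∀ P : List α, arcs (P ++ u :: q) = arcs (P ++ [u]) ++ arcs (u :: q)
  | [] => by simp [arcs]
  | [a] => by simp [arcs]
  | a :: b :: P => by
    have := arcs_append u q (b :: P)
    show (b, a) :: arcs (b :: (P ++ u :: q)) = (b, a) :: arcs (b :: (P ++ [u])) ++ arcs (u :: q)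
    rw [show b :: (P ++ u :: q) = b :: P ++ u :: q from rfl, this]
    rfl

/-- cost of a path -/
noncomputable def cost (n : ℕ) (z : Fin n → Fin n → ℝ) (l : List (Fin n)) : ℝ :=
  ((arcs l).map (fun p => (n : ℝ) * z p.1 p.2 - ((n : ℝ) - 1))).sum

lemma cost_single (n : ℕ) (z : Fin n → Fin n → ℝ) (v : Fin n) : cost n z [v] = 0 := by
  simp [cost, arcs]

lemma cost_cons (n : ℕ) (z : Fin n → Fin n → ℝ) (a b : Fin n) (t : List (Fin n)) :
    cost n z (a :: b :: t) = ((n : ℝ) * z b a - ((n : ℝ) - 1)) + cost n z (b :: t) := by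
  simp [cost, arcs]

lemma cost_append (n : ℕ) (z : Fin n → Fin n → ℝ) (P : List (Fin n)) (u : Fin n)
    (q : List (Fin n)) :
    cost n z (P ++ u :: q) = cost n z (P ++ [u]) + cost n z (u :: q) := by
  simp only [cost, arcs_append u q P, List.map_append, List.sum_append]

end Stmt14Aux

namespace Stmt14Aux

lemma cycle_nonpos (n : ℕ) (hn : 3 ≤ n) (z : Fin n → Fin n → ℝ)
    (h0 : ∀ v w, 0 ≤ z v w)
    (hsec : ∀ S : Finset (Fin n), S.Nonempty → S ≠ Finset.univ →
      ∑ v ∈ S, ∑ w ∈ S, z v w ≤ (S.card : ℝ) - 1)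
    (v w : Fin n) (p : List (Fin n))
    (hnd : (v :: p ++ [w]).Nodup)
    (hz0 : ∀ a ∈ v :: p ++ [w], a ≠ (⟨0, lt_of_lt_of_le (by norm_num) hn⟩ : Fin n)) :
    ((n : ℝ) * z v w - ((n : ℝ) - 1)) + cost n z (v :: p ++ [w]) ≤ 0 := by
  classical
  set M : List (Fin n) := v :: p ++ [w] with hM
  set f : Fin n × Fin n → ℝ := fun q => (n : ℝ) * z q.1 q.2 - ((n : ℝ) - 1) with hf
  set Q : List (Fin n × Fin n) := (v, w) :: arcs M with hQ
  have hQfst : Q.map Prod.fst = M := by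
    show v :: (arcs M).map Prod.fst = M
    rw [arcs_map_fst M]
    rfl
  have hQnd : Q.Nodup := List.Nodup.of_map Prod.fst (by rw [hQfst]; exact hnd)
  have hvM : v ∈ M := by simp [hM]
  have hwM : w ∈ M := by simp [hM]
  have hLHS : ((n : ℝ) * z v w - ((n : ℝ) - 1)) + cost n z M = (Q.map f).sum := by
    simp [hQ, cost, hf]
  rw [hLHS]
  set S : Finset (Fin n) := M.toFinset with hS
  set T : Finset (Fin n × Fin n) := Q.toFinset with hT
  have hsum : (Q.map f).sum = ∑ q ∈ T, f q := (List.sum_toFinset f hQnd).symm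
  have hTS : T ⊆ S ×ˢ S := by
    intro q hq
    rw [hT, List.mem_toFinset, hQ, List.mem_cons] at hq
    rw [Finset.mem_product]
    rcases hq with h | h
    · subst h; exact ⟨List.mem_toFinset.2 hvM, List.mem_toFinset.2 hwM⟩
    · obtain ⟨h1, h2⟩ := mem_arcs h
      exact ⟨List.mem_toFinset.2 h1, List.mem_toFinset.2 h2⟩
  have hzsum : ∑ q ∈ T, z q.1 q.2 ≤ (S.card : ℝ) - 1 := by
    have h1 : ∑ q ∈ T, z q.1 q.2 ≤ ∑ q ∈ S ×ˢ S, z q.1 q.2 :=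
      Finset.sum_le_sum_of_subset_of_nonneg hTS (fun i _ _ => h0 i.1 i.2)
    have h2 : ∑ q ∈ S ×ˢ S, z q.1 q.2 = ∑ a ∈ S, ∑ b ∈ S, z a b := by
      rw [Finset.sum_product]
    have hne : S.Nonempty := ⟨v, List.mem_toFinset.2 hvM⟩
    have hnu : S ≠ Finset.univ := by
      intro hcon
      have : (⟨0, lt_of_lt_of_le (by norm_num) hn⟩ : Fin n) ∈ S := hcon ▸ Finset.mem_univ _
      exact hz0 _ (List.mem_toFinset.1 this) rfl
    calc ∑ q ∈ T, z q.1 q.2 ≤ ∑ a ∈ S, ∑ b ∈ S, z a b := by rw [← h2]; exact h1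
      _ ≤ (S.card : ℝ) - 1 := hsec S hne hnu
  have hScard : S.card = M.length := List.toFinset_card_of_nodup hnd
  have hTcard : T.card = M.length := by
    rw [hT, List.toFinset_card_of_nodup hQnd, ← hQfst, List.length_map]
  have hklen : M.length = p.length + 2 := by simp [hM]
  have hkn : M.length ≤ n := by
    have := List.Nodup.length_le_card hnd
    simpa using this
  have hfsum : ∑ q ∈ T, f q = (n : ℝ) * ∑ q ∈ T, z q.1 q.2 - (T.card : ℝ) * ((n : ℝ) - 1) := by
    rw [hf]
    rw [Finset.sum_sub_distrib, ← Finset.mul_sum, Finset.sum_const, nsmul_eq_mul]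
  rw [hsum, hfsum, hTcard]
  have hk2 : (2 : ℝ) ≤ (M.length : ℝ) := by exact_mod_cast (by omega : 2 ≤ M.length)
  have hknR : (M.length : ℝ) ≤ (n : ℝ) := by exact_mod_cast hkn
  have hnR : (3 : ℝ) ≤ (n : ℝ) := by exact_mod_cast hn
  rw [hScard] at hzsum
  nlinarith [hzsum, mul_le_mul_of_nonneg_left hzsum (by linarith : (0:ℝ) ≤ (n:ℝ))]

end Stmt14Aux


open Stmt14Aux in

/-- The SEC polytope is contained in the MTZ polytope: every fractional point
`z` satisfying the degree constraints and the subtour elimination constraints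
can be completed with values `s v` satisfying the Miller–Tucker–Zemlin
constraints. -/
theorem stmt_14 (n : ℕ) (hn : 3 ≤ n) (z : Fin n → Fin n → ℝ)
    (h0 : ∀ v w, 0 ≤ z v w) (h1 : ∀ v w, z v w ≤ 1)
    (hdiag : ∀ v, z v v = 0)
    (hout : ∀ v, ∑ w ∈ Finset.univ.erase v, z v w = 1)
    (hin : ∀ v, ∑ w ∈ Finset.univ.erase v, z w v = 1)
    (hsec : ∀ S : Finset (Fin n), S.Nonempty → S ≠ Finset.univ →
      ∑ v ∈ S, ∑ w ∈ S, z v w ≤ (S.card : ℝ) - 1) :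
    ∃ s : Fin n → ℝ, ∀ v w : Fin n, v ≠ w → v ≠ ⟨0, by omega⟩ → w ≠ ⟨0, by omega⟩ →
      (n : ℝ) * z v w + s v - s w ≤ (n : ℝ) - 1 := by
  classical
  set z0 : Fin n := ⟨0, by omega⟩ with hz0def
  set A : Fin n → Set ℝ := fun u =>
    {x | ∃ l : List (Fin n), (u :: l).Nodup ∧ (∀ a ∈ u :: l, a ≠ z0) ∧
      x = cost n z (u :: l)} with hA
  have hbdd : ∀ u, BddAbove (A u) := by
    intro u
    refine ⟨(n : ℝ), ?_⟩
    rintro x ⟨l, hnd, -, rfl⟩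
    have hle : ∀ y ∈ (arcs (u :: l)).map
        (fun p => (n : ℝ) * z p.1 p.2 - ((n : ℝ) - 1)), y ≤ (1 : ℝ) := by
      intro y hy
      simp only [List.mem_map] at hy
      obtain ⟨q, -, rfl⟩ := hy
      have := h1 q.1 q.2
      nlinarith [h1 q.1 q.2, (by exact_mod_cast hn : (3:ℝ) ≤ (n:ℝ))]
    have hsum := List.sum_le_card_nsmul _ 1 hle
    have hlen : ((arcs (u :: l)).map
        (fun p => (n : ℝ) * z p.1 p.2 - ((n : ℝ) - 1))).length ≤ n := by
      rw [List.length_map, ← List.length_map (as := arcs (u :: l)) Prod.fst, arcs_map_fst]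
      have := List.Nodup.length_le_card hnd
      simp only [List.length_cons, Fintype.card_fin] at this
      simpa using (by omega : l.length ≤ n)
    calc cost n z (u :: l) ≤ _ • (1:ℝ) := hsum
      _ ≤ (n : ℝ) := by
        rw [nsmul_eq_mul, mul_one]
        exact_mod_cast hlen
  refine ⟨fun u => sSup (A u), ?_⟩
  intro v w hvw hv hw
  show (n:ℝ) * z v w + sSup (A v) - sSup (A w) ≤ (n:ℝ) - 1
  have hv' : v ≠ z0 := hv
  have hw' : w ≠ z0 := hw
  have hAvne : (A v).Nonempty := by
    refine ⟨0, [], by simp, ?_, by rw [cost_single]⟩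
    intro a ha
    simp only [List.mem_singleton] at ha
    subst ha; exact hv'
  have key : sSup (A v) ≤ sSup (A w) - ((n : ℝ) * z v w - ((n : ℝ) - 1)) := by
    refine csSup_le hAvne ?_
    rintro x ⟨l, hnd, hmem, rfl⟩
    rw [le_sub_iff_add_le]
    by_cases hwl : w ∈ l
    · -- w already on the path: close a cycle
      obtain ⟨p, q, rfl⟩ := List.append_of_mem hwl
      have heq : v :: (p ++ w :: q) = (v :: p) ++ w :: q := rfl
      have hsub1 : List.Sublist ((v :: p) ++ [w]) ((v :: p) ++ w :: q) :=
        List.Sublist.append_left (List.cons_sublist_cons.2 (List.nil_sublist q)) (v :: p)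
      have hsub2 : List.Sublist (w :: q) ((v :: p) ++ w :: q) := List.sublist_append_right _ _
      have hnd1 : ((v :: p) ++ [w]).Nodup := hnd.sublist hsub1
      have hnd2 : (w :: q).Nodup := hnd.sublist hsub2
      have hmem1 : ∀ a ∈ (v :: p) ++ [w], a ≠ z0 := fun a ha => hmem a (hsub1.mem ha)
      have hmem2 : ∀ a ∈ w :: q, a ≠ z0 := fun a ha => hmem a (hsub2.mem ha)
      have hcost : cost n z (v :: (p ++ w :: q)) =
          cost n z ((v :: p) ++ [w]) + cost n z (w :: q) := by
        rw [heq, cost_append]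
      have hcyc := cycle_nonpos n hn z h0 hsec v w p hnd1 hmem1
      have hin2 : cost n z (w :: q) ∈ A w := ⟨q, hnd2, hmem2, rfl⟩
      have hle2 : cost n z (w :: q) ≤ sSup (A w) := le_csSup (hbdd w) hin2
      rw [hcost]
      linarith
    · -- extend the path by w
      have hwvl : w ∉ v :: l := by
        intro hcon
        rcases List.mem_cons.1 hcon with h | h
        · exact hvw h.symm
        · exact hwl h
      have hnd' : (w :: v :: l).Nodup := List.nodup_cons.2 ⟨hwvl, hnd⟩
      have hmem' : ∀ a ∈ w :: v :: l, a ≠ z0 := by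
        intro a ha
        rcases List.mem_cons.1 ha with h | h
        · subst h; exact hw'
        · exact hmem a h
      have hin' : cost n z (w :: v :: l) ∈ A w := ⟨v :: l, hnd', hmem', rfl⟩
      have := le_csSup (hbdd w) hin'
      rw [cost_cons] at this
      linarith
  linarith
end
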